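/- Let κ be an infinite regular cardinal, I a proper ideal on κ containing every bounded subset of κ, δ ≤ κ an ordinal, and D ⊆ I⁺ a set that is dense in I⁺ modulo bounded sets (for every Y ∈ I⁺ there is B ∈ D with B ∖ Y bounded). Suppose ≤_T is a partial order on D such that B ≤_T B' implies B' ∖ B is bounded, and for each B ∈ D the set of strict ≤_T-predecessors of B is well-ordered by ≤_T with order type (the rank of B) less than δ; that is, (D, ≤_T) is a downward-growing tree of height at most δ. Then for every A ∈ D there exists α < δ such that the set {B ∈ D : B ∖ A is bounded and the rank of B equals α} has cardinality at least κ⁺. -/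

import Mathlib

open Cardinal

/-- A subset of the ordinals below `κ` (realized as the type `κ.ord.ToType`)
is bounded if it is contained in a proper initial segment. -/
def Bdd {C : Type*} [Preorder C] (X : Set C) : Prop :=
  ∃ b : C, X ⊆ Set.Iio b

theorem statement6 (κ : Cardinal.{0}) (hκreg : κ.IsRegular)
    (I : Set (Set κ.ord.ToType))
    (hdown : ∀ X Y : Set κ.ord.ToType, X ⊆ Y → Y ∈ I → X ∈ I)
    (hunion : ∀ X ∈ I, ∀ Y ∈ I, X ∪ Y ∈ I)
    (hproper : (Set.univ : Set κ.ord.ToType) ∉ I)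
    (hbdd : ∀ X : Set κ.ord.ToType, Bdd X → X ∈ I)
    (δ : Ordinal) (hδ : δ ≤ κ.ord)
    (D : Set (Set κ.ord.ToType))
    (hDpos : ∀ X ∈ D, X ∉ I)
    (hdense : ∀ Y : Set κ.ord.ToType, Y ∉ I → ∃ B ∈ D, Bdd (B \ Y))
    -- `lt` is the strict version of a partial order `≤_T` on `D`
    (lt : {X // X ∈ D} → {X // X ∈ D} → Prop)
    (hirrefl : ∀ b, ¬ lt b b)
    (htrans : ∀ a b c, lt a b → lt b c → lt a c)
    -- `B ≤_T B'` implies `B' ∖ B` is bounded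
    (halmost : ∀ a b, lt a b → Bdd ((b : Set κ.ord.ToType) \ (a : Set κ.ord.ToType)))
    -- the strict predecessors of each node are well-ordered by `≤_T` ...
    (hwo : ∀ b : {X // X ∈ D},
      IsWellOrder {c : {X // X ∈ D} // lt c b} (fun x y => lt x.1 y.1))
    -- ... and `rank b` is the order type of the set of strict predecessors of `b`,
    (rank : {X // X ∈ D} → Ordinal)
    (hrank : ∀ b : {X // X ∈ D},
      rank b = @Ordinal.type {c : {X // X ∈ D} // lt c b} (fun x y => lt x.1 y.1) (hwo b))
    -- which is less than `δ`: the tree has height at most `δ`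
    (hheight : ∀ b, rank b < δ) :
    ∀ A ∈ D, ∃ α < δ,
      Order.succ κ ≤
        #{b : {X // X ∈ D} | Bdd ((b : Set κ.ord.ToType) \ A) ∧ rank b = α} := by
  classical
  intro A hA
  by_contra hcon
  push_neg at hcon
  have hκ0 : ℵ₀ ≤ κ := hκreg.aleph0_le
  have hSmk : #κ.ord.ToType = κ := Cardinal.mk_ord_toType κ
  haveI hwoS : IsWellOrder κ.ord.ToType ((· < ·) : κ.ord.ToType → κ.ord.ToType → Prop) :=
    isWellOrder_lt
  have hAI : A ∉ I := hDpos A hA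
  set T : Set {X // X ∈ D} := {b | Bdd ((b : Set κ.ord.ToType) \ A)} with hT
  -- δ ≠ 0
  have hδ0 : δ ≠ 0 := by
    intro h
    exact zero_le.not_gt (h ▸ hheight ⟨A, hA⟩)
  haveI hδne : Nonempty δ.ToType := Ordinal.toType_nonempty_iff_ne_zero.2 hδ0
  -- T has size at most κ
  have hTcard : #T ≤ κ := by
    have hsub : T ⊆ ⋃ (x : δ.ToType),
        {b : {X // X ∈ D} | Bdd ((b : Set κ.ord.ToType) \ A) ∧
          rank b = (((Ordinal.ToType.mk (o := δ)).symm x : Set.Iio δ) : Ordinal)} := by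
      intro b hb
      refine Set.mem_iUnion.2 ⟨Ordinal.ToType.mk (o := δ) ⟨rank b, hheight b⟩, hb, ?_⟩
      simp
    refine le_trans (Cardinal.mk_le_mk_of_subset hsub) ?_
    refine le_trans (Cardinal.mk_iUnion_le _) ?_
    have h1 : #(δ.ToType) ≤ κ := by
      rw [Cardinal.mk_toType]
      exact le_of_le_of_eq (Ordinal.card_le_card hδ) (Cardinal.card_ord κ)
    have h2 : (⨆ x : δ.ToType, #{b : {X // X ∈ D} | Bdd ((b : Set κ.ord.ToType) \ A) ∧
        rank b = (((Ordinal.ToType.mk (o := δ)).symm x : Set.Iio δ) : Ordinal)}) ≤ κ := by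
      refine ciSup_le' fun x => ?_
      have := hcon _ (Set.mem_Iio.1 ((Ordinal.ToType.mk (o := δ)).symm x).2)
      exact Order.lt_succ_iff.1 this
    calc #(δ.ToType) * (⨆ x : δ.ToType, _) ≤ κ * κ := mul_le_mul' h1 h2
      _ = κ := Cardinal.mul_eq_self hκ0
  -- T is nonempty
  have hTne : T.Nonempty := by
    obtain ⟨B, hB, hBbd⟩ := hdense A hAI
    exact ⟨⟨B, hB⟩, hBbd⟩
  haveI : Nonempty ↥T := hTne.to_subtype
  -- every member of T meets A in a non-ideal set
  have hmem : ∀ b : {X // X ∈ D}, b ∈ T → ((b : Set κ.ord.ToType) ∩ A) ∉ I := by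
    intro b hb hIn
    refine hDpos (b : Set κ.ord.ToType) b.2 ?_
    refine hdown _ _ ?_ (hunion _ hIn _ (hbdd _ hb))
    intro x hx
    by_cases hxA : x ∈ A
    · exact Or.inl ⟨hx, hxA⟩
    · exact Or.inr ⟨hx, hxA⟩
  -- any set of size < κ is strictly bounded
  have hsmallbdd : ∀ P : Set κ.ord.ToType, #P < κ → ∃ b : κ.ord.ToType, ∀ p ∈ P, p < b := by
    intro P hP
    have hco : #P < Ordinal.cof (Ordinal.type ((· < ·) : κ.ord.ToType → κ.ord.ToType → Prop)) := by
      rwa [Ordinal.type_toType, hκreg.cof_eq]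
    have hco' : #P < Order.cof κ.ord.ToType := by rwa [Ordinal.cof_toType, hκreg.cof_eq]
    by_contra hne
    push_neg at hne
    have hcof : IsCofinal P := fun a => by
      obtain ⟨p, hp, hle⟩ := hne a
      exact ⟨p, hp, hle⟩
    exact (Order.cof_le hcof).not_gt hco'
  -- pick a point of (↑↑t ∩ A) above any small set
  have hpick : ∀ (t : ↥T) (P : Set κ.ord.ToType), #P < κ →
      ∃ x : κ.ord.ToType, x ∈ ((t : {X // X ∈ D}) : Set κ.ord.ToType) ∩ A ∧ ∀ p ∈ P, p < x := by
    intro t P hP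
    obtain ⟨b, hb⟩ := hsmallbdd P hP
    have hub : ¬ Bdd (((t : {X // X ∈ D}) : Set κ.ord.ToType) ∩ A) := by
      intro h
      exact hmem _ t.2 (hbdd _ h)
    rw [Bdd] at hub
    push_neg at hub
    obtain ⟨x, hx, hxb⟩ := Set.not_subset.1 (hub b)
    refine ⟨x, hx, fun p hp => lt_of_lt_of_le (hb p hp) ?_⟩
    simpa using hxb
  -- surjection from S onto ↥T × κ.ord.ToType × Bool
  have hικ : #(↥T × κ.ord.ToType × Bool) ≤ #κ.ord.ToType := by
    rw [Cardinal.mk_prod, Cardinal.mk_prod, Cardinal.lift_id, Cardinal.lift_id,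
      Cardinal.lift_id, Cardinal.lift_id, Cardinal.mk_bool, hSmk]
    have h2κ : (2 : Cardinal) ≤ κ := le_trans (by exact_mod_cast (Cardinal.nat_lt_aleph0 2).le) hκ0
    calc #↥T * (κ * 2) ≤ κ * (κ * κ) := mul_le_mul' hTcard (mul_le_mul' le_rfl h2κ)
      _ = κ := by rw [Cardinal.mul_eq_self hκ0, Cardinal.mul_eq_self hκ0]
  haveI : Nonempty κ.ord.ToType := Ordinal.toType_nonempty_iff_ne_zero.2
    (fun h => (Cardinal.aleph0_pos.trans_le hκ0).ne' (Cardinal.ord_eq_zero.1 h))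
  obtain ⟨f⟩ := Cardinal.le_def _ _ |>.1 hικ
  obtain ⟨q, hq⟩ : ∃ q : κ.ord.ToType → ↥T × κ.ord.ToType × Bool, Function.Surjective q :=
    ⟨Function.invFun f, Function.invFun_surjective f.injective⟩
  -- the diagonal recursion
  have hstage : ∀ (s : κ.ord.ToType) (ih : ∀ y : κ.ord.ToType, y < s → κ.ord.ToType), ∃ x : κ.ord.ToType,
      x ∈ (((q s).1 : {X // X ∈ D}) : Set κ.ord.ToType) ∩ A ∧ (q s).2.1 < x ∧
        ∀ y (h : y < s), ih y h < x := by
    intro s ih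
    set P : Set κ.ord.ToType := insert (q s).2.1 (Set.range fun y : Set.Iio s => ih y y.2) with hP
    have hPcard : #P < κ := by
      have h1 : #P ≤ #(Set.range fun y : Set.Iio s => ih y y.2) + 1 := Cardinal.mk_insert_le
      have h2 : #(Set.range fun y : Set.Iio s => ih y y.2) ≤ #(Set.Iio s) :=
        Cardinal.mk_range_le
      have h3 : #(Set.Iio s) < κ := Cardinal.mk_Iio_ord_toType s
      refine lt_of_le_of_lt (h1.trans (add_le_add_left h2 1)) ?_
      exact Cardinal.add_lt_of_lt hκ0 h3 (Cardinal.one_lt_aleph0.trans_le hκ0)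
    obtain ⟨x, hx, hgt⟩ := hpick (q s).1 P hPcard
    refine ⟨x, hx, hgt _ (Set.mem_insert _ _), fun y h => hgt _ ?_⟩
    exact Set.mem_insert_of_mem _ ⟨⟨y, h⟩, rfl⟩
  obtain ⟨z, hz⟩ : ∃ z : κ.ord.ToType → κ.ord.ToType, ∀ s : κ.ord.ToType,
      z s ∈ (((q s).1 : {X // X ∈ D}) : Set κ.ord.ToType) ∩ A ∧ (q s).2.1 < z s ∧
        ∀ y, y < s → z y < z s := by
    refine ⟨IsWellFounded.fix ((· < ·) : κ.ord.ToType → κ.ord.ToType → Prop)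
      (fun s ih => (hstage s ih).choose), fun s => ?_⟩
    rw [IsWellFounded.fix_eq]
    exact (hstage s _).choose_spec
  have hzinj : Function.Injective z := by
    intro a b hab
    by_contra hne
    rcases lt_or_gt_of_ne hne with h | h
    · exact absurd hab (ne_of_lt ((hz b).2.2 a h))
    · exact absurd hab.symm (ne_of_lt ((hz a).2.2 b h))
  set Z0 : Set κ.ord.ToType := z '' {s | (q s).2.2 = false} with hZ0
  set Z1 : Set κ.ord.ToType := z '' {s | (q s).2.2 = true} with hZ1
  have hZ0A : Z0 ⊆ A := by
    rintro x ⟨s, _, rfl⟩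
    exact (hz s).1.2
  have hdisj : ∀ x, x ∈ Z0 → x ∈ Z1 → False := by
    rintro x ⟨s, hs, hsx⟩ ⟨s', hs', hs'x⟩
    have : s = s' := hzinj (hsx.trans hs'x.symm)
    rw [this] at hs
    exact absurd (hs'.symm.trans hs) (by simp)
  -- points of any B ∈ T in Z_i above any bound
  have hmeet : ∀ (t : ↥T) (i : Bool) (c : κ.ord.ToType),
      ∃ x : κ.ord.ToType, x ∈ ((t : {X // X ∈ D}) : Set κ.ord.ToType) ∧ x ∈ z '' {s | (q s).2.2 = i} ∧ ¬ x < c := by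
    intro t i c
    obtain ⟨s, hs⟩ := hq (t, c, i)
    have h1 := (hz s).1
    have h2 := (hz s).2.1
    rw [hs] at h1 h2
    refine ⟨z s, h1.1, ⟨s, show (q s).2.2 = i by rw [hs], rfl⟩, fun h => absurd h2 (not_lt_of_gt h)⟩
  -- the two cases
  by_cases hcase : A \ Z0 ∈ I
  · -- Z0 ∉ I, diagonalize against Z0 using Z1
    have hY : Z0 ∉ I := by
      intro h
      refine hAI (hdown A _ ?_ (hunion _ hcase _ h))
      intro x hx
      by_cases hxZ : x ∈ Z0
      · exact Or.inr hxZ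
      · exact Or.inl ⟨hx, hxZ⟩
    obtain ⟨B, hB, hBbd⟩ := hdense Z0 hY
    have hBT : (⟨B, hB⟩ : {X // X ∈ D}) ∈ T := by
      obtain ⟨b, hb⟩ := hBbd
      exact ⟨b, fun x hx => hb ⟨hx.1, fun h => hx.2 (hZ0A h)⟩⟩
    obtain ⟨b, hb⟩ := hBbd
    obtain ⟨x, hxB, hxZ1, hxc⟩ := hmeet ⟨⟨B, hB⟩, hBT⟩ true b
    exact hxc (hb ⟨hxB, fun hxZ0 => hdisj x hxZ0 hxZ1⟩)
  · -- A \ Z0 ∉ I, diagonalize against A \ Z0 using Z0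
    obtain ⟨B, hB, hBbd⟩ := hdense (A \ Z0) hcase
    have hBT : (⟨B, hB⟩ : {X // X ∈ D}) ∈ T := by
      obtain ⟨b, hb⟩ := hBbd
      exact ⟨b, fun x hx => hb ⟨hx.1, fun h => hx.2 h.1⟩⟩
    obtain ⟨b, hb⟩ := hBbd
    obtain ⟨x, hxB, hxZ0, hxc⟩ := hmeet ⟨⟨B, hB⟩, hBT⟩ false b
    exact hxc (hb ⟨hxB, fun h => h.2 hxZ0⟩)
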